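/- If a rewriting relation R on a set decomposes as the union of two relations W and C, such that W strictly decreases a natural-number size measure and C strictly increases it, and C-steps cannot create W-redexes (i.e. if x has no W-redex and x C-steps to y then y has no W-redex), then for any x, first normalizing x under W and then under C yields an R-normal form of x. -/

import Mathlib

/-- If `R = W ∪ C`, where `W`-steps strictly decrease a size measure,
`C`-steps strictly increase it, and `C`-steps preserve `W`-normality,
then normalizing first under `W` and then under `C` yields an `R`-normal
form of the starting element. -/
theorem wk_then_cont_gives_normal_form {A : Type*} (W C : A → A → Prop) (s : A → ℕ)
    (hW : ∀ x y, W x y → s y < s x)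
    (hC : ∀ x y, C x y → s x < s y)
    (hpres : ∀ x y, (∀ u, ¬ W x u) → C x y → (∀ u, ¬ W y u)) :
    ∀ x y z, Relation.ReflTransGen W x y → (∀ u, ¬ W y u) →
      Relation.ReflTransGen C y z → (∀ u, ¬ C z u) →
      Relation.ReflTransGen (fun a b => W a b ∨ C a b) x z ∧
        (∀ u, ¬ W z u) ∧ (∀ u, ¬ C z u) := by
  intro x y z hxy hynf hyz hznf
  refine ⟨?_, ?_, hznf⟩
  · exact Relation.ReflTransGen.trans (Relation.ReflTransGen.mono (fun a b h => Or.inl h) _ _ hxy) (Relation.ReflTransGen.mono (fun a b h => Or.inr h) _ _ hyz)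
  · clear hznf
    induction hyz with
    | refl => exact hynf
    | tail _ hstep ih => exact hpres _ _ ih hstep
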